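/- In the discrimination setting, fix δ ∈ (0,1) and define τ₂^aux(p,δ) := (2α̂₂(p,δ) − α̂₁(p,δ))/(α̂₁(p,δ) + α̂₂(p,δ)). Then: τ₂^aux(·,δ) is continuous on [0,1); τ₂^aux(0,δ) = 1/2; τ₂^aux(p,δ) = 2 for all p ∈ [(1−δ)/2, 1); τ₂^aux(·,δ) is strictly increasing on [0, (1−δ)/2); consequently there exists a unique p^aux(δ) ∈ (0, (1−δ)/2) with τ₂^aux(p^aux(δ), δ) = 1, and the equilibrium allocation satisfies τ₂*(p,δ) = τ₂^aux(p,δ) for p ∈ [0, p^aux(δ)] and τ₂*(p,δ) = 1 for p ∈ [p^aux(δ), 1). -/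

import Mathlib

noncomputable section

/-! Discrimination setting (Section 5.2 of the paper): `K = 2`, prior means `0`,
prior variances `Σ⁰₁ = Σ⁰₂ = 1`, budget `T = 1`.  For discrimination level
`δ ∈ (0,1)` the politician's weights are `((1+δ)/2, (1−δ)/2)`; for partiality
level `p ∈ [0,1)` the advisor's weights are `((1−p)/2, (1+p)/2)`.

* `ah1 p δ, ah2 p δ` are the auxiliary weights `α̂₁(p,δ), α̂₂(p,δ)`.
* `tau2aux p δ` is `τ₂^aux(p,δ)` and `tau2star p δ = min{τ₂^aux(p,δ), 1}` is the
  advisor's equilibrium allocation of tests to group 2 (group 1 gets the rest).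
* `omega τ₂ δ` is utilitarian welfare as a function of the allocation, and
  `W p δ = ω(τ₂*(p,δ), δ)` is equilibrium welfare.
* `Dlt τ₂ δ` is the difference of the two groups' ex ante expected utilities and
  `Ineq p δ = |Δ(τ₂*(p,δ), δ)|` is equilibrium inequality. -/

/-- Auxiliary weight `α̂₁(p,δ)`. -/
def ah1 (p δ : ℝ) : ℝ :=
  if p < (1 - δ) / 2 then (1 / 2) * Real.sqrt ((1 + δ) * (1 - 2 * p - δ)) else 0

/-- Auxiliary weight `α̂₂(p,δ)`. -/
def ah2 (p δ : ℝ) : ℝ := (1 / 2) * Real.sqrt ((1 - δ) * (1 + 2 * p + δ))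

/-- `τ₂^aux(p,δ)`. -/
def tau2aux (p δ : ℝ) : ℝ := (2 * ah2 p δ - ah1 p δ) / (ah1 p δ + ah2 p δ)

/-- The advisor's equilibrium allocation of tests to group 2, `τ₂*(p,δ)`. -/
def tau2star (p δ : ℝ) : ℝ := min (tau2aux p δ) 1

/-- Utilitarian welfare `ω(τ₂, δ)` from splitting the budget as `(1−τ₂, τ₂)`. -/
def omega (τ2 δ : ℝ) : ℝ :=
  -3 - δ ^ 2 + ((1 + δ) ^ 2 / 2 + (1 + δ) * (1 - τ2)) / (2 - τ2)
    + ((1 - δ) ^ 2 / 2 + (1 - δ) * τ2) / (1 + τ2)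

/-- Equilibrium welfare `W(p,δ)`. -/
def W (p δ : ℝ) : ℝ := omega (tau2star p δ) δ

/-- Difference `Δ(τ₂,δ)` of the two groups' ex ante expected utilities. -/
def Dlt (τ2 δ : ℝ) : ℝ :=
  (1 + δ) * (1 - τ2) / (2 - τ2) - (1 - δ) * τ2 / (1 + τ2)

/-- Equilibrium inequality `I(p,δ)`. -/
def Ineq (p δ : ℝ) : ℝ := |Dlt (tau2star p δ) δ|

/-- Lemma 5 of the paper (properties of `τ₂^aux` and the threshold
partiality level `p^aux(δ)`). -/
theorem stmt_11 (δ : ℝ) (hδ : δ ∈ Set.Ioo (0 : ℝ) 1) :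
    ContinuousOn (fun p => tau2aux p δ) (Set.Ico (0 : ℝ) 1) ∧
    tau2aux 0 δ = 1 / 2 ∧
    (∀ p ∈ Set.Ico ((1 - δ) / 2) (1 : ℝ), tau2aux p δ = 2) ∧
    StrictMonoOn (fun p => tau2aux p δ) (Set.Ico (0 : ℝ) ((1 - δ) / 2)) ∧
    ∃ paux ∈ Set.Ioo (0 : ℝ) ((1 - δ) / 2),
      tau2aux paux δ = 1 ∧
      (∀ q ∈ Set.Ioo (0 : ℝ) ((1 - δ) / 2), tau2aux q δ = 1 → q = paux) ∧
      (∀ p ∈ Set.Icc (0 : ℝ) paux, tau2star p δ = tau2aux p δ) ∧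
      (∀ p ∈ Set.Ico paux (1 : ℝ), tau2star p δ = 1) := by
  obtain ⟨hδ0, hδ1⟩ := hδ
  have hδp : (0:ℝ) < 1 + δ := by linarith
  have hδm : (0:ℝ) < 1 - δ := by linarith
  have hhalf : (0:ℝ) < (1 - δ) / 2 := by linarith
  have hhalf1 : (1 - δ) / 2 < 1 := by linarith
  have hah2 : ∀ p : ℝ, 0 ≤ p → 0 < ah2 p δ := by
    intro p hp
    have h : 0 < (1 - δ) * (1 + 2 * p + δ) := by nlinarith
    have := Real.sqrt_pos.mpr h
    unfold ah2; linarith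
  have hah1nn : ∀ p : ℝ, 0 ≤ ah1 p δ := by
    intro p
    unfold ah1; split
    · positivity
    · exact le_refl 0
  have hden : ∀ p : ℝ, 0 ≤ p → 0 < ah1 p δ + ah2 p δ := by
    intro p hp
    have := hah2 p hp
    have := hah1nn p
    linarith
  have hah1eq : ∀ p : ℝ, ah1 p δ = (1/2) * Real.sqrt ((1 + δ) * (1 - 2*p - δ)) := by
    intro p
    unfold ah1; split
    · norm_num
    · rename_i h
      push_neg at h
      have h2 : (1 + δ) * (1 - 2*p - δ) ≤ 0 :=
        mul_nonpos_of_nonneg_of_nonpos (by linarith) (by linarith)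
      rw [Real.sqrt_eq_zero_of_nonpos h2]
      ring
  have hconteq : ∀ p : ℝ, tau2aux p δ =
      (2 * ((1/2) * Real.sqrt ((1-δ)*(1+2*p+δ))) - (1/2) * Real.sqrt ((1+δ)*(1-2*p-δ))) /
      ((1/2) * Real.sqrt ((1+δ)*(1-2*p-δ)) + (1/2) * Real.sqrt ((1-δ)*(1+2*p+δ))) := by
    intro p
    rw [tau2aux, hah1eq p, ah2]
  -- continuity
  have hcont : ContinuousOn (fun p => tau2aux p δ) (Set.Ico (0:ℝ) 1) := by
    simp only [hconteq]
    apply ContinuousOn.div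
    · apply Continuous.continuousOn
      fun_prop
    · apply Continuous.continuousOn
      fun_prop
    · intro x hx
      have h1 : 0 ≤ (1/2) * Real.sqrt ((1+δ)*(1-2*x-δ)) := by positivity
      have h2 : 0 < Real.sqrt ((1-δ)*(1+2*x+δ)) :=
        Real.sqrt_pos.mpr (by nlinarith [hx.1])
      intro hc
      nlinarith
  -- value at 0
  have h0 : tau2aux 0 δ = 1/2 := by
    have e1 : ah1 0 δ = ah2 0 δ := by
      have harg : (1+δ)*(1-2*(0:ℝ)-δ) = (1-δ)*(1+2*(0:ℝ)+δ) := by ring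
      rw [hah1eq, ah2, harg]
    have ha := hah2 0 le_rfl
    rw [tau2aux, e1, div_eq_iff (by linarith : ah2 0 δ + ah2 0 δ ≠ 0)]
    ring
  -- value 2 on the right piece
  have h2v : ∀ p ∈ Set.Ico ((1-δ)/2) (1:ℝ), tau2aux p δ = 2 := by
    intro p hp
    have hp0 : (0:ℝ) ≤ p := le_trans hhalf.le hp.1
    have e : ah1 p δ = 0 := by
      unfold ah1; rw [if_neg (not_lt.mpr hp.1)]
    have ha := hah2 p hp0
    rw [tau2aux, e, div_eq_iff (by linarith : (0:ℝ) + ah2 p δ ≠ 0)]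
    ring
  -- strict monotonicity
  have hmono : StrictMonoOn (fun p => tau2aux p δ) (Set.Ico (0:ℝ) ((1-δ)/2)) := by
    intro p hp q hq hpq
    simp only
    have hApos : 0 < (1+δ)*(1-2*p-δ) := by
      have := hp.2; nlinarith
    have hBpos : 0 < (1-δ)*(1+2*p+δ) := by
      have := hp.1; nlinarith
    have hCpos : 0 < (1+δ)*(1-2*q-δ) := by
      have := hq.2; nlinarith
    have hDpos : 0 < (1-δ)*(1+2*q+δ) := by
      have := hq.1; nlinarith
    have hkeyarg : (1-δ)*(1+2*p+δ) * ((1+δ)*(1-2*q-δ)) <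
        (1+δ)*(1-2*p-δ) * ((1-δ)*(1+2*q+δ)) := by
      nlinarith [mul_pos hδp hδm]
    have hkey : Real.sqrt ((1-δ)*(1+2*p+δ)) * Real.sqrt ((1+δ)*(1-2*q-δ)) <
        Real.sqrt ((1+δ)*(1-2*p-δ)) * Real.sqrt ((1-δ)*(1+2*q+δ)) := by
      rw [← Real.sqrt_mul hBpos.le, ← Real.sqrt_mul hApos.le]
      exact Real.sqrt_lt_sqrt (by positivity) hkeyarg
    rw [hconteq p, hconteq q]
    have hA : (0:ℝ) < Real.sqrt ((1+δ)*(1-2*p-δ)) := Real.sqrt_pos.mpr hApos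
    have hB : (0:ℝ) < Real.sqrt ((1-δ)*(1+2*p+δ)) := Real.sqrt_pos.mpr hBpos
    have hC : (0:ℝ) < Real.sqrt ((1+δ)*(1-2*q-δ)) := Real.sqrt_pos.mpr hCpos
    have hD : (0:ℝ) < Real.sqrt ((1-δ)*(1+2*q+δ)) := Real.sqrt_pos.mpr hDpos
    rw [div_lt_div_iff₀ (by linarith) (by linarith)]
    nlinarith [hkey]
  refine ⟨hcont, h0, h2v, hmono, ?_⟩
  -- IVT
  have hsub : Set.Icc (0:ℝ) ((1-δ)/2) ⊆ Set.Ico (0:ℝ) 1 := fun x hx =>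
    ⟨hx.1, lt_of_le_of_lt hx.2 hhalf1⟩
  have hivt := intermediate_value_Icc hhalf.le (hcont.mono hsub)
  have h1mem : (1:ℝ) ∈ Set.Icc (tau2aux 0 δ) (tau2aux ((1-δ)/2) δ) := by
    rw [h0, h2v ((1-δ)/2) ⟨le_refl _, hhalf1⟩]
    constructor <;> norm_num
  obtain ⟨paux, hpmem, hpval⟩ := hivt h1mem
  simp only at hpval
  have hne0 : paux ≠ 0 := by
    intro h; rw [h, h0] at hpval; norm_num at hpval
  have hneh : paux ≠ (1-δ)/2 := by
    intro h
    rw [h, h2v ((1-δ)/2) ⟨le_refl _, hhalf1⟩] at hpval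
    norm_num at hpval
  have hpIoo : paux ∈ Set.Ioo (0:ℝ) ((1-δ)/2) :=
    ⟨lt_of_le_of_ne hpmem.1 (Ne.symm hne0), lt_of_le_of_ne hpmem.2 hneh⟩
  have hpIco : paux ∈ Set.Ico (0:ℝ) ((1-δ)/2) := ⟨hpIoo.1.le, hpIoo.2⟩
  refine ⟨paux, hpIoo, hpval, ?_, ?_, ?_⟩
  · intro q hq hq1
    exact hmono.injOn ⟨hq.1.le, hq.2⟩ hpIco (by simp only [hq1, hpval])
  · intro p hp
    have hpIco' : p ∈ Set.Ico (0:ℝ) ((1-δ)/2) := ⟨hp.1, lt_of_le_of_lt hp.2 hpIoo.2⟩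
    have hle : tau2aux p δ ≤ tau2aux paux δ :=
      hmono.monotoneOn hpIco' hpIco hp.2
    rw [tau2star, min_eq_left (by rw [hpval] at hle; exact hle)]
  · intro p hp
    have h1le : 1 ≤ tau2aux p δ := by
      rcases lt_or_ge p ((1-δ)/2) with h | h
      · have hpIco' : p ∈ Set.Ico (0:ℝ) ((1-δ)/2) := ⟨le_trans hpIoo.1.le hp.1, h⟩
        have := hmono.monotoneOn hpIco hpIco' hp.1
        rw [hpval] at this
        exact this
      · rw [h2v p ⟨h, hp.2⟩]; norm_num
    rw [tau2star, min_eq_right h1le]
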